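/- Let (X,f) be a topological dynamical system that is multi-transitive with respect to a sequence A of positive integers whose set of terms contains B − B = {b − b' : b, b' ∈ B, b > b'} for some infinite set B ⊆ ℕ. Let (Y,g) be a topological dynamical system admitting a g-invariant Borel probability measure μ with full support. Then for every two non-empty open subsets U, V of X and every non-empty open subset W of Y, there exists n ≥ 1 with f^n(U) ∩ V ≠ ∅ and g^n(W) ∩ W ≠ ∅. -/
import Mathlib


open Function Set Filter Topology MeasureTheory

/-- A topological dynamical system `f : X → X` is (topologically) transitive if for every
two non-empty open subsets `U`, `V` there exists `n ≥ 1` with `f^[n] '' U ∩ V ≠ ∅`. -/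
def IsTopTransitive {X : Type*} [TopologicalSpace X] (f : X → X) : Prop :=
  ∀ U V : Set X, IsOpen U → IsOpen V → U.Nonempty → V.Nonempty →
    ∃ n : ℕ, 1 ≤ n ∧ (f^[n] '' U ∩ V).Nonempty

/-- Multi-transitivity with respect to a vector `a = (a₁, …, a_r)`: the product system
`(X^r, f^{a₁} × ⋯ × f^{a_r})` is transitive. -/
def MultiTransWrt {X : Type*} [TopologicalSpace X] (f : X → X) {r : ℕ} (a : Fin r → ℕ) : Prop :=
  IsTopTransitive (fun x : Fin r → X => fun i => f^[a i] (x i))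

/-- `(X, f)` is multi-transitive if it is multi-transitive with respect to `(1, 2, …, n)`
for every `n ≥ 1`. -/
def MultiTrans {X : Type*} [TopologicalSpace X] (f : X → X) : Prop :=
  ∀ n : ℕ, 1 ≤ n → MultiTransWrt f (fun i : Fin n => (i : ℕ) + 1)

/-- `(X, f)` is strongly multi-transitive if it is multi-transitive with respect to every
vector of positive integers. -/
def StrongMultiTrans {X : Type*} [TopologicalSpace X] (f : X → X) : Prop :=
  ∀ r : ℕ, 1 ≤ r → ∀ a : Fin r → ℕ, (∀ i, 1 ≤ a i) → MultiTransWrt f a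

/-- The hitting time set `N(U, V) = {n ≥ 1 : f^[n] '' U ∩ V ≠ ∅}`. -/
def HittingTimes {X : Type*} [TopologicalSpace X] (f : X → X) (U V : Set X) : Set ℕ :=
  {n : ℕ | 1 ≤ n ∧ (f^[n] '' U ∩ V).Nonempty}

/-- Iterates of a product map act coordinatewise. -/
lemma pi_iterate {X : Type*} (f : X → X) (a : ℕ → ℕ) (m : ℕ) (x : ℕ → X) :
    (fun x : ℕ → X => fun i => f^[a i] (x i))^[m] x = fun i => f^[a i * m] (x i) := by
  induction m generalizing x with
  | zero => simp
  | succ m ih =>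
      rw [Function.iterate_succ_apply, ih]
      funext i
      rw [Nat.mul_succ, Function.iterate_add_apply]

theorem seqMultiTrans_diffSet_claim
    {X : Type*} [MetricSpace X] [CompactSpace X] (f : X → X) (hf : Continuous f)
    (a : ℕ → ℕ) (ha : ∀ i, 1 ≤ a i) (B : Set ℕ) (hB : B.Infinite)
    (hBa : ∀ b ∈ B, ∀ b' ∈ B, b' < b → b - b' ∈ Set.range a)
    (hA : IsTopTransitive (fun x : ℕ → X => fun i => f^[a i] (x i)))
    {Y : Type*} [MetricSpace Y] [CompactSpace Y] [MeasurableSpace Y] [BorelSpace Y]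
    (g : Y → Y) (hg : Continuous g) (μ : Measure Y) [IsProbabilityMeasure μ]
    (hinv : ∀ s : Set Y, MeasurableSet s → μ (g ⁻¹' s) = μ s)
    (hfull : ∀ W : Set Y, IsOpen W → W.Nonempty → 0 < μ W) :
    ∀ U V : Set X, IsOpen U → IsOpen V → U.Nonempty → V.Nonempty →
      ∀ W : Set Y, IsOpen W → W.Nonempty →
        ∃ n : ℕ, 1 ≤ n ∧ (f^[n] '' U ∩ V).Nonempty ∧ (g^[n] '' W ∩ W).Nonempty := by
  intro U V hU hV hUne hVne W hW hWne
  classical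
  -- basic measure facts
  have hWpos : 0 < μ W := hfull W hW hWne
  have hWmeas : MeasurableSet W := hW.measurableSet
  have hiter : ∀ k : ℕ, μ (g^[k] ⁻¹' W) = μ W := by
    intro k
    induction k with
    | zero => simp
    | succ k ih =>
        rw [Function.iterate_succ, Set.preimage_comp,
          hinv _ ((hg.iterate k).measurable hWmeas)]
        exact ih
  -- choose `N` with `1 < N * μ W`
  obtain ⟨N, hN⟩ : ∃ N : ℕ, (1 : ENNReal) / μ W < N :=
    ENNReal.exists_nat_gt (ENNReal.div_lt_top ENNReal.one_ne_top hWpos.ne').ne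
  have hNmul : (1 : ENNReal) < ↑N * μ W :=
    (ENNReal.div_lt_iff (Or.inl hWpos.ne') (Or.inl (measure_lt_top μ W).ne)).1 hN
  -- choose N elements of B in increasing order
  obtain ⟨t, htB, htcard⟩ := hB.exists_subset_card_eq N
  set b : Fin N → ℕ := fun j => t.orderEmbOfFin htcard j with hb
  have hbmono : StrictMono b := (t.orderEmbOfFin htcard).strictMono
  have hbB : ∀ j, b j ∈ B := fun j => htB (Finset.orderEmbOfFin_mem t htcard j)
  -- index choice function for differences
  have hdiff : ∀ j j' : Fin N, j < j' → ∃ i : ℕ, a i = b j' - b j := by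
    intro j j' hjj
    obtain ⟨i, hi⟩ := hBa (b j') (hbB j') (b j) (hbB j) (hbmono hjj)
    exact ⟨i, hi⟩
  let idx : Fin N → Fin N → ℕ := fun j j' =>
    if h : j < j' then (hdiff j j' h).choose else 0
  have hidx : ∀ j j' : Fin N, (h : j < j') → a (idx j j') = b j' - b j := by
    intro j j' h
    simp only [idx, dif_pos h]
    exact (hdiff j j' h).choose_spec
  let F : Finset ℕ := Finset.image (fun p : Fin N × Fin N => idx p.1 p.2) Finset.univ
  -- apply transitivity of the infinite product to the cylinder sets over F
  obtain ⟨u, hu⟩ := hUne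
  obtain ⟨v, hv⟩ := hVne
  set Up : Set (ℕ → X) := ⋂ i ∈ F, (fun x : ℕ → X => x i) ⁻¹' U with hUp
  set Vp : Set (ℕ → X) := ⋂ i ∈ F, (fun x : ℕ → X => x i) ⁻¹' V with hVp
  have hUpo : IsOpen Up := isOpen_biInter_finset fun i _ => hU.preimage (continuous_apply i)
  have hVpo : IsOpen Vp := isOpen_biInter_finset fun i _ => hV.preimage (continuous_apply i)
  have hUpne : Up.Nonempty := ⟨fun _ => u, by simp [hUp, hu]⟩
  have hVpne : Vp.Nonempty := ⟨fun _ => v, by simp [hVp, hv]⟩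
  obtain ⟨m, hm1, z, ⟨x, hxU, hxz⟩, hzV⟩ := hA Up Vp hUpo hVpo hUpne hVpne
  have hhit : ∀ i ∈ F, (f^[a i * m] '' U ∩ V).Nonempty := by
    intro i hi
    refine ⟨z i, ⟨x i, ?_, ?_⟩, ?_⟩
    · exact Set.mem_iInter₂.1 hxU i hi
    · rw [← hxz, pi_iterate]
    · exact Set.mem_iInter₂.1 hzV i hi
  -- measure pigeonhole on the sets g^[b j * m] ⁻¹' W
  set S : Fin N → Set Y := fun j => g^[b j * m] ⁻¹' W with hS
  have hSmeas : ∀ j, NullMeasurableSet (S j) μ :=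
    fun j => (((hg.iterate _).measurable hWmeas)).nullMeasurableSet
  have hSsum : μ (Set.univ : Set Y) < ∑' j : Fin N, μ (S j) := by
    have : ∀ j : Fin N, μ (S j) = μ W := fun j => hiter _
    rw [tsum_fintype]
    simp only [this, Finset.sum_const, Finset.card_univ, Fintype.card_fin, nsmul_eq_mul]
    simpa using hNmul
  obtain ⟨j, j', hne, y, hyj, hyj'⟩ :=
    MeasureTheory.exists_nonempty_inter_of_measure_univ_lt_tsum_measure μ hSmeas hSsum
  -- WLOG j < j'
  wlog hlt : j < j' generalizing j j'
  · exact this j' j hne.symm hyj' hyj ((hne.lt_or_gt).resolve_left hlt)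
  -- assemble
  refine ⟨a (idx j j') * m, ?_, ?_, ?_⟩
  · exact Nat.one_le_iff_ne_zero.2 (Nat.mul_ne_zero (Nat.one_le_iff_ne_zero.1 (ha _))
      (Nat.one_le_iff_ne_zero.1 hm1))
  · exact hhit (idx j j') (Finset.mem_image.2 ⟨(j, j'), Finset.mem_univ _, rfl⟩)
  · refine ⟨g^[a (idx j j') * m] (g^[b j * m] y), ⟨g^[b j * m] y, hyj, rfl⟩, ?_⟩
    rw [← Function.iterate_add_apply, hidx j j' hlt]
    have : (b j' - b j) * m + b j * m = b j' * m := by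
      have hle : b j ≤ b j' := (hbmono hlt).le
      rw [← Nat.add_mul, Nat.sub_add_cancel hle]
    rw [this]
    exact hyj'
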